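/- Non-commutative full-discrete relativistic Toda equation (Theorem 4.7): for every k ∈ ℤ and every i ≥ 0, assuming all Toeplitz matrices T and all quasi-determinants H, G occurring below are invertible (resp. nonzero), the following identities among the quasi-determinant quantities hold: (ψ_i^{(k+1)} − φ_i^{(k)})·ψ_{i+1}^{(k)} = ψ_i^{(k+1)}·(ψ_i^{(k)} − φ_i^{(k−1)}), and, for i ≥ 1, ψ_i^{(k)} − φ_i^{(k)} = ψ_{i−1}^{(k)} − φ_{i−1}^{(k−1)}. -/

import Mathlib

/-- The `n × n` shifted Toeplitz matrix `T_n^{(k)} = (m(k + i − j))_{i,j=0}^{n−1}`. -/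
noncomputable def Tmat {R : Type*} [DivisionRing R] (m : ℤ → R) (k : ℤ) (n : ℕ) :
    Matrix (Fin n) (Fin n) R :=
  Matrix.of fun i j => m (k + (i.val : ℤ) - (j.val : ℤ))

/-- The Laurent polynomial `(Q_n^{(k)})*(z) = z^{−n} − Σ_{i=0}^{n−1} c_i z^{−i}`, where
`(c_0, …, c_{n−1})ᵀ = (T_n^{(k)})⁻¹·(m(k−n), …, m(k−1))ᵀ`, given as the coefficient
function `ℤ → R` (the value at `e` is the coefficient of `z^e`). -/
noncomputable def Qs {R : Type*} [DivisionRing R] (m : ℤ → R) (k : ℤ) (n : ℕ) :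
    ℤ → R := fun e =>
  if e = -(n : ℤ) then 1
  else if he : -(n : ℤ) < e ∧ e ≤ 0 then
    -(∑ j : Fin n, Ring.inverse (Tmat m k n) ⟨(-e).toNat, by omega⟩ j *
      m (k - (n : ℤ) + (j.val : ℤ)))
  else 0

/-- The quasi-determinant
`H_n^{(k)} = m(k) − (m(k+n), …, m(k+1))·(T_n^{(k)})⁻¹·(m(k−n), …, m(k−1))ᵀ`
(with `H_0^{(k)} = m(k)`). -/
noncomputable def Hq {R : Type*} [DivisionRing R] (m : ℤ → R) (n : ℕ) (k : ℤ) : R :=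
  m k - ∑ j : Fin n, ∑ l : Fin n,
    m (k + (n : ℤ) - (j.val : ℤ)) * Ring.inverse (Tmat m k n) j l *
      m (k - (n : ℤ) + (l.val : ℤ))

/-- The quasi-determinant
`G_n^{(k)} = m(k−n) − (m(k), …, m(k−n+1))·(T_n^{(k+1)})⁻¹·(m(k+1−n), …, m(k))ᵀ`
(with `G_0^{(k)} = m(k)`). -/
noncomputable def Gq {R : Type*} [DivisionRing R] (m : ℤ → R) (n : ℕ) (k : ℤ) : R :=
  m (k - (n : ℤ)) - ∑ j : Fin n, ∑ l : Fin n,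
    m (k - (j.val : ℤ)) * Ring.inverse (Tmat m (k + 1) n) j l *
      m (k + 1 - (n : ℤ) + (l.val : ℤ))

/-- `ψ_n^{(k)} = (H_n^{(k)})⁻¹·H_n^{(k−1)}`. -/
noncomputable def psi {R : Type*} [DivisionRing R] (m : ℤ → R) (n : ℕ) (k : ℤ) : R :=
  (Hq m n k)⁻¹ * Hq m n (k - 1)

/-- `φ_n^{(k)} = (G_n^{(k)})⁻¹·G_n^{(k−1)}`. -/
noncomputable def phi {R : Type*} [DivisionRing R] (m : ℤ → R) (n : ℕ) (k : ℤ) : R :=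
  (Gq m n k)⁻¹ * Gq m n (k - 1)

open Finset Matrix

section Core
variable {R : Type*} [DivisionRing R] {n : ℕ}

lemma inverse_eq_of' {M₀ : Type*} [MonoidWithZero M₀] {a b : M₀}
    (h1 : a * b = 1) (h2 : b * a = 1) : Ring.inverse a = b := by
  have hu : IsUnit a := ⟨⟨a, b, h1, h2⟩, rfl⟩
  calc Ring.inverse a = Ring.inverse a * (a * b) := by rw [h1, mul_one]
    _ = (Ring.inverse a * a) * b := by rw [mul_assoc]
    _ = b := by rw [Ring.inverse_mul_cancel _ hu, one_mul]

/-- entry sum relation from `A * B = 1`, splitting the interior sum at `q`. -/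
lemma rowRel (A B : Matrix (Fin (n+1)) (Fin (n+1)) R) (hAB : A * B = 1)
    (q : Fin (n+1)) (x y : Fin (n+1)) :
    ∑ c, A x (q.succAbove c) * B (q.succAbove c) y
      = (if x = y then 1 else 0) - A x q * B q y := by
  have h : (A * B) x y = (1 : Matrix (Fin (n+1)) (Fin (n+1)) R) x y := by rw [hAB]
  rw [Matrix.mul_apply, Fin.sum_univ_succAbove (fun c => A x c * B c y) q,
    Matrix.one_apply] at h
  exact eq_sub_of_add_eq' h

lemma colRel (A B : Matrix (Fin (n+1)) (Fin (n+1)) R) (hBA : B * A = 1)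
    (p : Fin (n+1)) (x y : Fin (n+1)) :
    ∑ r, B x (p.succAbove r) * A (p.succAbove r) y
      = (if x = y then 1 else 0) - B x p * A p y := by
  have h : (B * A) x y = (1 : Matrix (Fin (n+1)) (Fin (n+1)) R) x y := by rw [hBA]
  rw [Matrix.mul_apply, Fin.sum_univ_succAbove (fun c => B x c * A c y) p,
    Matrix.one_apply] at h
  exact eq_sub_of_add_eq' h

/-- If a principal-type submatrix (delete row `p`, column `q`) is invertible,
the `(q,p)` entry of the inverse is nonzero. -/
lemma quot_pivot_ne_zero (A B : Matrix (Fin (n+1)) (Fin (n+1)) R)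
    (hAB : A * B = 1) (hBA : B * A = 1) (p q : Fin (n+1))
    (hsub : IsUnit (A.submatrix p.succAbove q.succAbove)) : B q p ≠ 0 := by
  intro h0
  set As := A.submatrix p.succAbove q.succAbove with hAs
  have hWl : As * Ring.inverse As = 1 := Ring.mul_inverse_cancel _ hsub
  have key : ∀ c, ∑ r, B q (p.succAbove r) * As r c = 0 := by
    intro c
    have h := colRel A B hBA p q (q.succAbove c)
    rw [if_neg (Ne.symm (Fin.succAbove_ne q c)), h0, zero_mul, zero_sub, neg_zero] at h
    simpa [hAs, Matrix.submatrix_apply] using h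
  have hw : ∀ r, B q (p.succAbove r) = 0 := by
    intro r0
    have h1 : B q (p.succAbove r0)
        = ∑ r, B q (p.succAbove r) * (As * Ring.inverse As) r r0 := by
      rw [hWl]
      simp [Matrix.one_apply, mul_ite, mul_one, mul_zero]
    rw [h1]
    have h2 : ∀ r, B q (p.succAbove r) * (As * Ring.inverse As) r r0
        = ∑ c, B q (p.succAbove r) * As r c * Ring.inverse As c r0 := by
      intro r
      rw [Matrix.mul_apply, Finset.mul_sum]
      exact Finset.sum_congr rfl fun c _ => by rw [mul_assoc]
    rw [Finset.sum_congr rfl fun r _ => h2 r, Finset.sum_comm]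
    apply Finset.sum_eq_zero
    intro c _
    rw [← Finset.sum_mul, key c, zero_mul]
  have h1 : (B * A) q q = 0 := by
    rw [Matrix.mul_apply, Fin.sum_univ_succAbove (fun c => B q c * A c q) p, h0, zero_mul,
      zero_add]
    apply Finset.sum_eq_zero
    intro r _
    rw [hw r, zero_mul]
  rw [hBA, Matrix.one_apply_eq] at h1
  exact one_ne_zero h1

/-- Quotient identity: inverse of a submatrix via Schur complement of the inverse. -/
lemma quot_inv_eq (A B : Matrix (Fin (n+1)) (Fin (n+1)) R)
    (hAB : A * B = 1) (hBA : B * A = 1) (p q : Fin (n+1)) (hpiv : B q p ≠ 0) :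
    Ring.inverse (A.submatrix p.succAbove q.succAbove)
      = Matrix.of (fun c r => B (q.succAbove c) (p.succAbove r)
          - B (q.succAbove c) p * (B q p)⁻¹ * B q (p.succAbove r)) := by
  set As := A.submatrix p.succAbove q.succAbove with hAs
  set C : Matrix (Fin n) (Fin n) R := Matrix.of (fun c r => B (q.succAbove c) (p.succAbove r)
          - B (q.succAbove c) p * (B q p)⁻¹ * B q (p.succAbove r)) with hC
  have h1 : As * C = 1 := by
    ext r r'
    rw [Matrix.mul_apply]
    have expand : ∀ c : Fin n, As r c * C c r'
        = A (p.succAbove r) (q.succAbove c) * B (q.succAbove c) (p.succAbove r')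
          - A (p.succAbove r) (q.succAbove c) * B (q.succAbove c) p * (B q p)⁻¹
            * B q (p.succAbove r') := by
      intro c
      simp only [hAs, hC, Matrix.submatrix_apply, Matrix.of_apply]
      rw [mul_sub]
      simp [mul_assoc]
    rw [Finset.sum_congr rfl fun c _ => expand c, Finset.sum_sub_distrib]
    have e1 := rowRel A B hAB q (p.succAbove r) (p.succAbove r')
    have e2 := rowRel A B hAB q (p.succAbove r) p
    rw [if_neg (Fin.succAbove_ne p r)] at e2
    have e3 : ∑ c, A (p.succAbove r) (q.succAbove c) * B (q.succAbove c) p * (B q p)⁻¹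
            * B q (p.succAbove r')
        = (∑ c, A (p.succAbove r) (q.succAbove c) * B (q.succAbove c) p) * ((B q p)⁻¹
            * B q (p.succAbove r')) := by
      rw [Finset.sum_mul]
      exact Finset.sum_congr rfl fun c _ => by simp [mul_assoc]
    rw [e3, e1, e2]
    have : A (p.succAbove r) q * B q p * ((B q p)⁻¹ * B q (p.succAbove r'))
        = A (p.succAbove r) q * B q (p.succAbove r') := by
      rw [mul_assoc, ← mul_assoc (B q p), mul_inv_cancel₀ hpiv, one_mul]
    rw [zero_sub, neg_mul, this]
    have hone : ((1 : Matrix (Fin n) (Fin n) R) r r')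
        = (if (p.succAbove r) = (p.succAbove r') then (1:R) else 0) := by
      rw [Matrix.one_apply]
      simp [Fin.succAbove_right_inj]
    rw [hone, sub_neg_eq_add, sub_add_cancel]
  have h2 : C * As = 1 := by
    ext c' c
    rw [Matrix.mul_apply]
    have expand : ∀ r : Fin n, C c' r * As r c
        = B (q.succAbove c') (p.succAbove r) * A (p.succAbove r) (q.succAbove c)
          - B (q.succAbove c') p * (B q p)⁻¹
            * (B q (p.succAbove r) * A (p.succAbove r) (q.succAbove c)) := by
      intro r
      simp only [hAs, hC, Matrix.submatrix_apply, Matrix.of_apply]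
      rw [sub_mul]
      simp [mul_assoc]
    rw [Finset.sum_congr rfl fun r _ => expand r, Finset.sum_sub_distrib]
    have e1 := colRel A B hBA p (q.succAbove c') (q.succAbove c)
    have e2 := colRel A B hBA p q (q.succAbove c)
    rw [if_neg (Ne.symm (Fin.succAbove_ne q c))] at e2
    rw [← Finset.mul_sum, e1, e2]
    have hone : ((1 : Matrix (Fin n) (Fin n) R) c' c)
        = (if (q.succAbove c') = (q.succAbove c) then (1:R) else 0) := by
      rw [Matrix.one_apply]
      simp [Fin.succAbove_right_inj]
    have this2 : B (q.succAbove c') p * (B q p)⁻¹ * (B q p * A p (q.succAbove c))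
        = B (q.succAbove c') p * A p (q.succAbove c) := by
      rw [mul_assoc, ← mul_assoc (B q p)⁻¹, inv_mul_cancel₀ hpiv, one_mul]
    rw [hone, zero_sub, mul_neg, this2, sub_neg_eq_add, sub_add_cancel]
  exact inverse_eq_of' h1 h2

/-- Extension: if the `(p,q)`-deleted submatrix has two-sided inverse `W` and the
Schur-type scalar `s` is nonzero, then `A` is invertible with `(A⁻¹) q p = s⁻¹`. -/
lemma ext_build (A : Matrix (Fin (n+1)) (Fin (n+1)) R) (p q : Fin (n+1))
    (W : Matrix (Fin n) (Fin n) R)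
    (h1 : A.submatrix p.succAbove q.succAbove * W = 1)
    (h2 : W * A.submatrix p.succAbove q.succAbove = 1)
    (s : R)
    (hs : s = A p q - ∑ j, ∑ i, A p (q.succAbove j) * W j i * A (p.succAbove i) q)
    (hs0 : s ≠ 0) :
    IsUnit A ∧ Ring.inverse A q p = s⁻¹ := by
  classical
  set P : Fin n → R := fun r => ∑ j, A p (q.succAbove j) * W j r with hP
  set Qv : Fin n → R := fun c => ∑ i, W c i * A (p.succAbove i) q with hQv
  set B : Matrix (Fin (n+1)) (Fin (n+1)) R := Matrix.of (fun c =>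
    q.insertNth (α := fun _ => Fin (n+1) → R)
      (p.insertNth (α := fun _ => R) s⁻¹ (fun r => -(s⁻¹ * P r)))
      (fun c' => p.insertNth (α := fun _ => R) (-(Qv c' * s⁻¹))
        (fun r => W c' r + Qv c' * s⁻¹ * P r)) c)
    with hBdef
  have Bqp : B q p = s⁻¹ := by simp [hBdef]
  have Bqr : ∀ r, B q (p.succAbove r) = -(s⁻¹ * P r) := by intro r; simp [hBdef]
  have Bcp : ∀ c, B (q.succAbove c) p = -(Qv c * s⁻¹) := by intro c; simp [hBdef]
  have Bcr : ∀ c r, B (q.succAbove c) (p.succAbove r) = W c r + Qv c * s⁻¹ * P r := by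
    intro c r; simp [hBdef]
  have hAW : ∀ (r i : Fin n), ∑ c, A (p.succAbove r) (q.succAbove c) * W c i
      = (if r = i then (1:R) else 0) := by
    intro r i
    have h := congrFun (congrFun h1 r) i
    rw [Matrix.mul_apply] at h
    simpa [Matrix.one_apply, Matrix.submatrix_apply] using h
  have hWA : ∀ (c r : Fin n), ∑ i, W c i * A (p.succAbove i) (q.succAbove r)
      = (if c = r then (1:R) else 0) := by
    intro c r
    have h := congrFun (congrFun h2 c) r
    rw [Matrix.mul_apply] at h
    simpa [Matrix.one_apply, Matrix.submatrix_apply] using h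
  have sumQv : ∀ x, ∑ c, A x (q.succAbove c) * Qv c
      = ∑ i, (∑ c, A x (q.succAbove c) * W c i) * A (p.succAbove i) q := by
    intro x
    simp only [hQv, Finset.mul_sum]
    rw [Finset.sum_comm]
    refine Finset.sum_congr rfl fun i _ => ?_
    rw [Finset.sum_mul]
    exact Finset.sum_congr rfl fun c _ => by rw [mul_assoc]
  have sumP : ∀ y, ∑ r, P r * A (p.succAbove r) y
      = ∑ j, A p (q.succAbove j) * (∑ r, W j r * A (p.succAbove r) y) := by
    intro y
    simp only [hP, Finset.sum_mul]
    rw [Finset.sum_comm]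
    refine Finset.sum_congr rfl fun j _ => ?_
    rw [Finset.mul_sum]
    exact Finset.sum_congr rfl fun r _ => by rw [mul_assoc]
  have hsQ : A p q - ∑ c, A p (q.succAbove c) * Qv c = s := by
    rw [sumQv, hs]
    congr 1
    rw [Finset.sum_comm]
    refine Finset.sum_congr rfl fun i _ => ?_
    rw [Finset.sum_mul]
  have hsP : A p q - ∑ r, P r * A (p.succAbove r) q = s := by
    rw [sumP, hs]
    congr 1
    refine Finset.sum_congr rfl fun j _ => ?_
    rw [Finset.mul_sum]
    exact Finset.sum_congr rfl fun r _ => by rw [mul_assoc]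
  have hABone : A * B = 1 := by
    ext x y
    rw [Matrix.mul_apply, Fin.sum_univ_succAbove (fun c => A x c * B c y) q]
    by_cases hyp : y = p
    case pos =>
      rw [hyp]
      simp only [Bqp, Bcp]
      have key : A x q * s⁻¹ + ∑ c, A x (q.succAbove c) * -(Qv c * s⁻¹)
          = (A x q - ∑ c, A x (q.succAbove c) * Qv c) * s⁻¹ := by
        rw [sub_mul, Finset.sum_mul]
        simp only [mul_neg, ← mul_assoc, Finset.sum_neg_distrib, ← sub_eq_add_neg]
      rw [key]
      by_cases hxp : x = p
      case pos =>
        rw [hxp]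
        rw [hsQ, mul_inv_cancel₀ hs0, Matrix.one_apply_eq]
      case neg =>
        obtain ⟨r, rfl⟩ := Fin.exists_succAbove_eq hxp
        have hz : A (p.succAbove r) q - ∑ c, A (p.succAbove r) (q.succAbove c) * Qv c
            = 0 := by
          rw [sumQv]
          rw [Finset.sum_congr rfl fun i _ => by rw [hAW r i]]
          simp
        rw [hz, zero_mul, Matrix.one_apply_ne (Fin.succAbove_ne p r)]
    case neg =>
      obtain ⟨r', rfl⟩ := Fin.exists_succAbove_eq hyp
      simp only [Bqr, Bcr]
      have key : A x q * -(s⁻¹ * P r')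
            + ∑ c, A x (q.succAbove c) * (W c r' + Qv c * s⁻¹ * P r')
          = (∑ c, A x (q.succAbove c) * W c r')
            - (A x q - ∑ c, A x (q.succAbove c) * Qv c) * (s⁻¹ * P r') := by
        simp only [mul_add, Finset.sum_add_distrib, sub_mul, Finset.sum_mul, mul_neg,
          mul_assoc]
        abel
      rw [key]
      by_cases hxp : x = p
      case pos =>
        rw [hxp]
        rw [hsQ]
        have : P r' - s * (s⁻¹ * P r') = 0 := by
          rw [← mul_assoc, mul_inv_cancel₀ hs0, one_mul, sub_self]
        rw [hP] at this ⊢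
        rw [this, Matrix.one_apply_ne (Ne.symm (Fin.succAbove_ne p r'))]
      case neg =>
        obtain ⟨r, rfl⟩ := Fin.exists_succAbove_eq hxp
        have hz : A (p.succAbove r) q - ∑ c, A (p.succAbove r) (q.succAbove c) * Qv c
            = 0 := by
          rw [sumQv]
          rw [Finset.sum_congr rfl fun i _ => by rw [hAW r i]]
          simp
        rw [hz, zero_mul, sub_zero, hAW r r', Matrix.one_apply]
        simp [Fin.succAbove_right_inj]
  have hBAone : B * A = 1 := by
    ext x y
    rw [Matrix.mul_apply, Fin.sum_univ_succAbove (fun c => B x c * A c y) p]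
    by_cases hxq : x = q
    case pos =>
      rw [hxq]
      simp only [Bqp, Bqr]
      have key : s⁻¹ * A p y + ∑ r, -(s⁻¹ * P r) * A (p.succAbove r) y
          = s⁻¹ * (A p y - ∑ r, P r * A (p.succAbove r) y) := by
        rw [mul_sub, Finset.mul_sum]
        simp only [neg_mul, mul_assoc, Finset.sum_neg_distrib, ← sub_eq_add_neg]
      rw [key]
      by_cases hyq : y = q
      case pos =>
        rw [hyq]
        rw [hsP, inv_mul_cancel₀ hs0, Matrix.one_apply_eq]
      case neg =>
        obtain ⟨c, rfl⟩ := Fin.exists_succAbove_eq hyq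
        have hz : A p (q.succAbove c) - ∑ r, P r * A (p.succAbove r) (q.succAbove c)
            = 0 := by
          rw [sumP]
          rw [Finset.sum_congr rfl fun j _ => by rw [hWA j c]]
          simp
        rw [hz, mul_zero, Matrix.one_apply_ne (Ne.symm (Fin.succAbove_ne q c))]
    case neg =>
      obtain ⟨c', rfl⟩ := Fin.exists_succAbove_eq hxq
      simp only [Bcp, Bcr]
      have key : -(Qv c' * s⁻¹) * A p y
            + ∑ r, (W c' r + Qv c' * s⁻¹ * P r) * A (p.succAbove r) y
          = (∑ r, W c' r * A (p.succAbove r) y)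
            + Qv c' * (s⁻¹ * ((∑ r, P r * A (p.succAbove r) y) - A p y)) := by
        simp only [add_mul, Finset.sum_add_distrib, neg_mul, mul_sub, Finset.mul_sum,
          mul_assoc]
        abel
      rw [key]
      by_cases hyq : y = q
      case pos =>
        rw [hyq]
        have hz : (∑ r, P r * A (p.succAbove r) q) - A p q = -s := by
          rw [← hsP]; exact (neg_sub _ _).symm
        rw [hz]
        have h4 : Qv c' * (s⁻¹ * -s) = -Qv c' := by
          rw [mul_neg, inv_mul_cancel₀ hs0, mul_neg, mul_one]
        have h5 : (∑ r, W c' r * A (p.succAbove r) q) = Qv c' := by rw [hQv]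
        rw [h4, h5, Matrix.one_apply_ne (Fin.succAbove_ne q c')]
        simp
      case neg =>
        obtain ⟨c, rfl⟩ := Fin.exists_succAbove_eq hyq
        have hz : (∑ r, P r * A (p.succAbove r) (q.succAbove c)) - A p (q.succAbove c)
            = 0 := by
          rw [sumP]
          rw [Finset.sum_congr rfl fun j _ => by rw [hWA j c]]
          simp
        rw [hz, mul_zero, mul_zero, add_zero, hWA c' c, Matrix.one_apply]
        simp [Fin.succAbove_right_inj]
  refine ⟨⟨⟨A, B, hABone, hBAone⟩, rfl⟩, ?_⟩
  rw [inverse_eq_of' hABone hBAone, Bqp]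

end Core

section Toeplitz
variable {R : Type*} [DivisionRing R] (m : ℤ → R)

lemma Tmat_sub_ll (k : ℤ) (n : ℕ) :
    (Tmat m k (n+1)).submatrix (Fin.last n).succAbove (Fin.last n).succAbove
      = Tmat m k n := by
  ext i j
  simp [Tmat, Fin.succAbove_last]

lemma Tmat_sub_00 (k : ℤ) (n : ℕ) :
    (Tmat m k (n+1)).submatrix (0 : Fin (n+1)).succAbove (0 : Fin (n+1)).succAbove
      = Tmat m k n := by
  ext i j
  simp only [Matrix.submatrix_apply, Tmat, Matrix.of_apply, Fin.succAbove_zero, Fin.val_succ]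
  congr 1
  push_cast
  ring

lemma Tmat_sub_0l (k : ℤ) (n : ℕ) :
    (Tmat m k (n+1)).submatrix (0 : Fin (n+1)).succAbove (Fin.last n).succAbove
      = Tmat m (k+1) n := by
  ext i j
  simp only [Matrix.submatrix_apply, Tmat, Matrix.of_apply, Fin.succAbove_zero,
    Fin.succAbove_last, Fin.val_succ, Fin.coe_castSucc]
  congr 1
  push_cast
  ring

lemma Tmat_sub_l0 (k : ℤ) (n : ℕ) :
    (Tmat m k (n+1)).submatrix (Fin.last n).succAbove (0 : Fin (n+1)).succAbove
      = Tmat m (k-1) n := by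
  ext i j
  simp only [Matrix.submatrix_apply, Tmat, Matrix.of_apply, Fin.succAbove_zero,
    Fin.succAbove_last, Fin.val_succ, Fin.coe_castSucc]
  congr 1
  push_cast
  ring

lemma Hq_dict (n : ℕ) (k : ℤ) (hT : IsUnit (Tmat m k n)) (hH : Hq m n k ≠ 0) :
    IsUnit (Tmat m k (n+1)) ∧
      Ring.inverse (Tmat m k (n+1)) (Fin.last n) (Fin.last n) = (Hq m n k)⁻¹ := by
  have h1 : (Tmat m k (n+1)).submatrix (Fin.last n).succAbove (Fin.last n).succAbove
      * Ring.inverse (Tmat m k n) = 1 := by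
    rw [Tmat_sub_ll]; exact Ring.mul_inverse_cancel _ hT
  have h2 : Ring.inverse (Tmat m k n)
      * (Tmat m k (n+1)).submatrix (Fin.last n).succAbove (Fin.last n).succAbove = 1 := by
    rw [Tmat_sub_ll]; exact Ring.inverse_mul_cancel _ hT
  have hsid : Hq m n k = (Tmat m k (n+1)) (Fin.last n) (Fin.last n)
      - ∑ j, ∑ i, (Tmat m k (n+1)) (Fin.last n) ((Fin.last n).succAbove j)
        * Ring.inverse (Tmat m k n) j i
        * (Tmat m k (n+1)) ((Fin.last n).succAbove i) (Fin.last n) := by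
    simp only [Hq, Tmat, Matrix.of_apply, Fin.succAbove_last, Fin.coe_castSucc, Fin.val_last]
    refine congrArg₂ (fun a b => a - b) ?_ ?_
    · congr 1; push_cast; ring
    · refine Finset.sum_congr rfl fun j _ => Finset.sum_congr rfl fun l _ => ?_
      congr 1
      congr 1
      push_cast; ring
  exact ext_build (Tmat m k (n+1)) (Fin.last n) (Fin.last n) (Ring.inverse (Tmat m k n))
    h1 h2 (Hq m n k) hsid hH

lemma Gq_dict (n : ℕ) (k : ℤ) (hT : IsUnit (Tmat m (k+1) n)) (hG : Gq m n k ≠ 0) :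
    IsUnit (Tmat m k (n+1)) ∧
      Ring.inverse (Tmat m k (n+1)) (Fin.last n) 0 = (Gq m n k)⁻¹ := by
  have h1 : (Tmat m k (n+1)).submatrix (0 : Fin (n+1)).succAbove (Fin.last n).succAbove
      * Ring.inverse (Tmat m (k+1) n) = 1 := by
    rw [Tmat_sub_0l]; exact Ring.mul_inverse_cancel _ hT
  have h2 : Ring.inverse (Tmat m (k+1) n)
      * (Tmat m k (n+1)).submatrix (0 : Fin (n+1)).succAbove (Fin.last n).succAbove = 1 := by
    rw [Tmat_sub_0l]; exact Ring.inverse_mul_cancel _ hT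
  have hsid : Gq m n k = (Tmat m k (n+1)) 0 (Fin.last n)
      - ∑ j, ∑ i, (Tmat m k (n+1)) 0 ((Fin.last n).succAbove j)
        * Ring.inverse (Tmat m (k+1) n) j i
        * (Tmat m k (n+1)) ((0 : Fin (n+1)).succAbove i) (Fin.last n) := by
    simp only [Gq, Tmat, Matrix.of_apply, Fin.succAbove_last, Fin.succAbove_zero,
      Fin.coe_castSucc, Fin.val_last, Fin.val_succ, Fin.val_zero]
    refine congrArg₂ (fun a b => a - b) ?_ ?_
    · congr 1; push_cast; ring
    · refine Finset.sum_congr rfl fun j _ => Finset.sum_congr rfl fun l _ => ?_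
      refine congrArg₂ (· * ·) (congrArg₂ (· * ·) ?_ rfl) ?_ <;> (congr 1; push_cast; ring)
  exact ext_build (Tmat m k (n+1)) 0 (Fin.last n) (Ring.inverse (Tmat m (k+1) n))
    h1 h2 (Gq m n k) hsid hG

end Toeplitz


section LemA
variable {R : Type*} [DivisionRing R]

lemma lemA (m : ℤ → R) (n : ℕ) (k : ℤ)
    (hTa : IsUnit (Tmat m k n)) (hTb : IsUnit (Tmat m (k+1) n))
    (hHa : Hq m n k ≠ 0) (hHb : Hq m n (k+1) ≠ 0) (hHc : Hq m (n+1) k ≠ 0)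
    (hGa : Gq m n k ≠ 0) :
    Hq m (n+1) k = Hq m n k - Hq m n (k+1) * (Gq m n k)⁻¹ * Gq m n (k-1) := by
  obtain ⟨hA1, hBll⟩ := Hq_dict m n k hTa hHa
  obtain ⟨-, hBl0⟩ := Gq_dict m n k hTb hGa
  obtain ⟨hA2, hEll⟩ := Hq_dict m n (k+1) hTb hHb
  obtain ⟨hM, hDll⟩ := Hq_dict m (n+1) k hA1 hHc
  set ℓ : Fin (n+2) := Fin.last (n+1) with hℓ
  set t : Fin (n+2) := (Fin.last n).castSucc with ht
  set D : Matrix (Fin (n+2)) (Fin (n+2)) R := Ring.inverse (Tmat m k (n+2)) with hD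
  set B : Matrix (Fin (n+1)) (Fin (n+1)) R := Ring.inverse (Tmat m k (n+1)) with hB
  have hMD : Tmat m k (n+2) * D = 1 := Ring.mul_inverse_cancel _ hM
  have hDM : D * Tmat m k (n+2) = 1 := Ring.inverse_mul_cancel _ hM
  have hA1B : Tmat m k (n+1) * B = 1 := Ring.mul_inverse_cancel _ hA1
  have hBA1 : B * Tmat m k (n+1) = 1 := Ring.inverse_mul_cancel _ hA1
  set a : R := D ℓ ℓ with hadef
  set b : R := D ℓ 0 with hbdef
  set c : R := D 0 ℓ with hcdef
  set d : R := D 0 0 with hddef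
  have hDll' : a = (Hq m (n+1) k)⁻¹ := hDll
  have ha0 : a ≠ 0 := by rw [hDll']; exact inv_ne_zero hHc
  have hd0 : d ≠ 0 :=
    quot_pivot_ne_zero _ D hMD hDM 0 0 (by rw [Tmat_sub_00]; exact hA1)
  have hb0 : b ≠ 0 :=
    quot_pivot_ne_zero _ D hMD hDM 0 ℓ (by rw [Tmat_sub_0l]; exact hA2)
  have hQ00 := quot_inv_eq _ D hMD hDM 0 0 hd0
  rw [Tmat_sub_00] at hQ00
  have hQll := quot_inv_eq _ D hMD hDM ℓ ℓ ha0
  rw [hℓ, Tmat_sub_ll] at hQll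
  have hQ0l := quot_inv_eq _ D hMD hDM 0 ℓ hb0
  rw [hℓ, Tmat_sub_0l] at hQ0l
  -- entry equations
  have e_h : (Hq m n k)⁻¹ = a - b * d⁻¹ * c := by
    rw [← hBll, hB, hQ00]
    simp only [Matrix.of_apply, Fin.succAbove_zero, Fin.succ_last]
    rfl
  have e_g : (Gq m n k)⁻¹ = D t 0 - D t ℓ * a⁻¹ * b := by
    rw [← hBl0, hB, hQll]
    simp only [Matrix.of_apply, Fin.succAbove_last, Fin.castSucc_zero]
    rfl
  have e_hp : (Hq m n (k+1))⁻¹ = D t ℓ - D t 0 * b⁻¹ * a := by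
    rw [← hEll, hQ0l]
    simp only [Matrix.of_apply, Fin.succAbove_last, Fin.succAbove_zero, Fin.succ_last]
    rfl
  have e_B : ∀ x y : Fin (n+1),
      B x y = D x.castSucc y.castSucc - D x.castSucc ℓ * a⁻¹ * D ℓ y.castSucc := by
    intro x y
    rw [hB, hQll]
    simp only [Matrix.of_apply, Fin.succAbove_last]
    rfl
  have e_K : B 0 0 = d - c * a⁻¹ * b := by
    rw [e_B 0 0, Fin.castSucc_zero]
  have hK0 : B 0 0 ≠ 0 :=
    quot_pivot_ne_zero _ B hA1B hBA1 0 0 (by rw [Tmat_sub_00]; exact hTa)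
  have hV := quot_inv_eq _ B hA1B hBA1 0 0 hK0
  rw [Tmat_sub_00] at hV
  -- row and column relations
  have hsplit : ∀ f : Fin (n+2) → R, ∑ J, f J = f 0 + ∑ j : Fin n, f (j.succ).castSucc + f ℓ := by
    intro f
    rw [Fin.sum_univ_succ, Fin.sum_univ_castSucc]
    rw [Finset.sum_congr rfl (fun j (_ : j ∈ Finset.univ) => by rw [Fin.succ_castSucc])]
    rw [Fin.succ_last, ← add_assoc]
  have T00 : Tmat m k (n+2) 0 0 = m k := by simp [Tmat]
  have T0j : ∀ j : Fin n, Tmat m k (n+2) 0 (j.succ).castSucc = m (k - 1 - (j : ℤ)) := by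
    intro j
    simp only [Tmat, Matrix.of_apply, Fin.coe_castSucc, Fin.val_succ, Fin.val_zero]
    congr 1; push_cast; ring
  have T0L : Tmat m k (n+2) 0 ℓ = m (k - 1 - (n : ℤ)) := by
    simp only [Tmat, Matrix.of_apply, hℓ, Fin.val_last, Fin.val_zero]
    congr 1; push_cast; ring
  have TjL : ∀ l : Fin n, Tmat m k (n+2) (l.succ).castSucc ℓ = m (k - (n : ℤ) + (l : ℤ)) := by
    intro l
    simp only [Tmat, Matrix.of_apply, hℓ, Fin.coe_castSucc, Fin.val_succ, Fin.val_last]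
    congr 1; push_cast; ring
  have TLL : Tmat m k (n+2) ℓ ℓ = m k := by
    simp only [Tmat, Matrix.of_apply, hℓ, Fin.val_last]
    congr 1; ring
  have row0 : ∀ s : Fin (n+2),
      ∑ j : Fin n, m (k - 1 - (j : ℤ)) * D (j.succ).castSucc s
        = (if (0 : Fin (n+2)) = s then 1 else 0) - m k * D 0 s
          - m (k - 1 - (n : ℤ)) * D ℓ s := by
    intro s
    have h := congrFun (congrFun hMD 0) s
    rw [Matrix.mul_apply, hsplit (fun J => Tmat m k (n+2) 0 J * D J s), T00, T0L,
      Finset.sum_congr rfl (fun j (_ : j ∈ Finset.univ) => by rw [T0j j]),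
      Matrix.one_apply] at h
    rw [← h]; abel
  have colL : ∀ s : Fin (n+2),
      ∑ l : Fin n, D s (l.succ).castSucc * m (k - (n : ℤ) + (l : ℤ))
        = (if s = ℓ then 1 else 0) - D s 0 * m (k - 1 - (n : ℤ)) - D s ℓ * m k := by
    intro s
    have h := congrFun (congrFun hDM s) ℓ
    rw [Matrix.mul_apply, hsplit (fun J => D s J * Tmat m k (n+2) J ℓ), T0L, TLL,
      Finset.sum_congr rfl (fun l (_ : l ∈ Finset.univ) => by rw [TjL l]),
      Matrix.one_apply] at h
    rw [← h]; abel
  -- cancellation helpers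
  have caL : ∀ z : R, a * (a⁻¹ * z) = z := fun z => by
    rw [← mul_assoc, mul_inv_cancel₀ ha0, one_mul]
  have caR : ∀ z : R, a⁻¹ * (a * z) = z := fun z => by
    rw [← mul_assoc, inv_mul_cancel₀ ha0, one_mul]
  have cbL : ∀ z : R, b * (b⁻¹ * z) = z := fun z => by
    rw [← mul_assoc, mul_inv_cancel₀ hb0, one_mul]
  have cK1 : ∀ z : R, B 0 0 * ((B 0 0)⁻¹ * z) = z := fun z => by
    rw [← mul_assoc, mul_inv_cancel₀ hK0, one_mul]
  have cK2 : ∀ z : R, (B 0 0)⁻¹ * (B 0 0 * z) = z := fun z => by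
    rw [← mul_assoc, inv_mul_cancel₀ hK0, one_mul]
  -- key contraction identities
  have c1 : ∀ y : Fin (n+1), ∑ j : Fin n, m (k - 1 - (j : ℤ)) * B j.succ y
      = (if (0 : Fin (n+1)) = y then 1 else 0) - m k * B 0 y := by
    intro y
    have expand : ∀ j : Fin n, m (k - 1 - (j : ℤ)) * B j.succ y
        = m (k - 1 - (j : ℤ)) * D (j.succ).castSucc y.castSucc
          - (m (k - 1 - (j : ℤ)) * D (j.succ).castSucc ℓ) * (a⁻¹ * D ℓ y.castSucc) := by
      intro j
      rw [e_B, mul_sub]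
      simp only [mul_assoc]
    rw [Finset.sum_congr rfl fun j _ => expand j, Finset.sum_sub_distrib, ← Finset.sum_mul,
      row0 y.castSucc, row0 ℓ]
    have d1 : (if (0 : Fin (n+2)) = y.castSucc then (1:R) else 0)
        = (if (0 : Fin (n+1)) = y then 1 else 0) := by
      have hiff : ((0 : Fin (n+2)) = y.castSucc) ↔ ((0 : Fin (n+1)) = y) := by
        rw [← Fin.castSucc_zero, Fin.castSucc_inj]
      rw [if_congr hiff rfl rfl]
    have d2 : (if (0 : Fin (n+2)) = ℓ then (1:R) else 0) = 0 := by
      rw [if_neg]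
      simp [hℓ, Fin.ext_iff]
    rw [d1, d2, e_B 0 y, Fin.castSucc_zero]
    simp only [← hadef, ← hbdef, ← hcdef, ← hddef, zero_sub, sub_mul, neg_mul, mul_sub, mul_assoc, caL]
    abel
  have c20 : ∑ l : Fin n, B 0 l.succ * m (k - (n : ℤ) + (l : ℤ))
      = -((d - c * a⁻¹ * b) * m (k - 1 - (n : ℤ))) - c * a⁻¹ := by
    have expand : ∀ l : Fin n, B 0 l.succ * m (k - (n : ℤ) + (l : ℤ))
        = D 0 (l.succ).castSucc * m (k - (n : ℤ) + (l : ℤ))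
          - c * (a⁻¹ * (D ℓ (l.succ).castSucc * m (k - (n : ℤ) + (l : ℤ)))) := by
      intro l
      rw [e_B 0 l.succ, Fin.castSucc_zero, sub_mul]
      simp only [mul_assoc, hcdef]
    rw [Finset.sum_congr rfl fun l _ => expand l, Finset.sum_sub_distrib,
      ← Finset.mul_sum, ← Finset.mul_sum, colL 0, colL ℓ]
    have d3 : (if (0 : Fin (n+2)) = ℓ then (1:R) else 0) = 0 := by
      rw [if_neg]; simp [hℓ, Fin.ext_iff]
    have d4 : (if ℓ = ℓ then (1:R) else 0) = 1 := if_pos rfl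
    rw [d3, d4]
    simp only [← hadef, ← hbdef, ← hcdef, ← hddef, zero_sub, sub_mul, neg_mul, mul_sub, mul_one, mul_assoc, caR]
    abel
  -- step 1 : row contraction against the small inverse
  have step1 : ∀ l : Fin n, ∑ j : Fin n, m (k - 1 - (j : ℤ)) * Ring.inverse (Tmat m k n) j l
      = -((B 0 0)⁻¹ * B 0 l.succ) := by
    intro l
    have expand : ∀ j : Fin n, m (k - 1 - (j : ℤ)) * Ring.inverse (Tmat m k n) j l
        = m (k - 1 - (j : ℤ)) * B j.succ l.succ
          - (m (k - 1 - (j : ℤ)) * B j.succ 0) * ((B 0 0)⁻¹ * B 0 l.succ) := by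
      intro j
      rw [hV]
      simp only [Matrix.of_apply, Fin.succAbove_zero, mul_sub, mul_assoc]
    rw [Finset.sum_congr rfl fun j _ => expand j, Finset.sum_sub_distrib, ← Finset.sum_mul,
      c1 l.succ, c1 0]
    have d5 : (if (0 : Fin (n+1)) = l.succ then (1:R) else 0) = 0 := by
      rw [if_neg (Ne.symm (Fin.succ_ne_zero l))]
    have d6 : (if (0 : Fin (n+1)) = 0 then (1:R) else 0) = 1 := if_pos rfl
    rw [d5, d6]
    simp only [zero_sub, sub_mul, neg_mul, one_mul, mul_assoc, cK1]
    abel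
  -- the G-contraction
  have contract : Gq m n (k-1) = -((B 0 0)⁻¹ * (c * a⁻¹)) := by
    have hGdef : Gq m n (k-1) = m (k - 1 - (n : ℤ))
        - ∑ j : Fin n, ∑ l : Fin n, m (k - 1 - (j : ℤ)) * Ring.inverse (Tmat m k n) j l
          * m (k - (n : ℤ) + (l : ℤ)) := by
      simp only [Gq, sub_add_cancel]
    rw [hGdef, Finset.sum_comm]
    have inner : ∀ l : Fin n,
        ∑ j : Fin n, m (k - 1 - (j : ℤ)) * Ring.inverse (Tmat m k n) j l
          * m (k - (n : ℤ) + (l : ℤ))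
        = -((B 0 0)⁻¹ * (B 0 l.succ * m (k - (n : ℤ) + (l : ℤ)))) := by
      intro l
      rw [← Finset.sum_mul, step1 l]
      simp only [neg_mul, mul_assoc]
    rw [Finset.sum_congr rfl fun l _ => inner l, Finset.sum_neg_distrib, ← Finset.mul_sum,
      c20]
    rw [mul_sub, mul_neg, ← e_K, cK2]
    simp only [sub_neg_eq_add, neg_add_rev, neg_neg, mul_neg]
    abel
  -- final algebra
  have hh1 : Hq m (n+1) k = a⁻¹ := by rw [hDll', inv_inv]
  have hp_eq : Hq m n (k+1) = -(a⁻¹ * b * Gq m n k) := by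
    have h5 : (Hq m n (k+1))⁻¹ = -((Gq m n k)⁻¹ * (b⁻¹ * a)) := by
      rw [e_hp, e_g, sub_mul, neg_sub]
      congr 1
      · simp only [mul_assoc, cbL, inv_mul_cancel₀ ha0, mul_one]
      · rw [mul_assoc]
    have h6 : Hq m n (k+1) = (-((Gq m n k)⁻¹ * (b⁻¹ * a)))⁻¹ := by
      rw [← h5, inv_inv]
    calc Hq m n (k+1) = (-((Gq m n k)⁻¹ * (b⁻¹ * a)))⁻¹ := h6
      _ = -(((Gq m n k)⁻¹ * (b⁻¹ * a))⁻¹) := inv_neg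
      _ = -((b⁻¹ * a)⁻¹ * ((Gq m n k)⁻¹)⁻¹) := by rw [_root_.mul_inv_rev]
      _ = -(a⁻¹ * b * Gq m n k) := by simp only [_root_.mul_inv_rev, inv_inv]
  have cg : ∀ z : R, Gq m n k * ((Gq m n k)⁻¹ * z) = z := fun z => by
    rw [← mul_assoc, mul_inv_cancel₀ hGa, one_mul]
  have hfrac : Hq m n (k+1) * (Gq m n k)⁻¹ * Gq m n (k-1)
      = a⁻¹ * (b * ((B 0 0)⁻¹ * (c * a⁻¹))) := by
    rw [hp_eq, contract]
    simp only [neg_mul, mul_neg, neg_neg, mul_assoc, cg]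
  have hZ : (a⁻¹ + a⁻¹ * (b * ((B 0 0)⁻¹ * (c * a⁻¹)))) * (Hq m n k)⁻¹ = 1 := by
    rw [e_h]
    have hcb : c * a⁻¹ * b = d - B 0 0 := by rw [e_K, sub_sub_cancel]
    have key2 : c * (a⁻¹ * (b * (d⁻¹ * c))) = c - B 0 0 * (d⁻¹ * c) := by
      calc c * (a⁻¹ * (b * (d⁻¹ * c))) = c * a⁻¹ * b * (d⁻¹ * c) := by
            simp only [mul_assoc]
        _ = (d - B 0 0) * (d⁻¹ * c) := by rw [hcb]
        _ = d * (d⁻¹ * c) - B 0 0 * (d⁻¹ * c) := sub_mul _ _ _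
        _ = c - B 0 0 * (d⁻¹ * c) := by rw [← mul_assoc, mul_inv_cancel₀ hd0, one_mul]
    rw [add_mul, mul_sub, mul_sub]
    simp only [mul_assoc]
    rw [inv_mul_cancel₀ ha0]
    simp only [caR, key2, mul_sub, cK2]
    simp only [mul_sub, mul_one, sub_neg_eq_add]
    abel
  have hfinal : Hq m n k = a⁻¹ + a⁻¹ * (b * ((B 0 0)⁻¹ * (c * a⁻¹))) := by
    have := eq_inv_of_mul_eq_one_left hZ
    rw [inv_inv] at this
    exact this.symm
  rw [hh1, hfrac, hfinal]
  abel
end LemA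

section LemB
variable {R : Type*} [DivisionRing R]

lemma lemB (m : ℤ → R) (n : ℕ) (k : ℤ)
    (hT1 : IsUnit (Tmat m (k+1) (n+1))) (hT2 : IsUnit (Tmat m k (n+1)))
    (hT4 : IsUnit (Tmat m (k-1) (n+2))) (hT5 : IsUnit (Tmat m (k-1) (n+1)))
    (hT6 : IsUnit (Tmat m k n))
    (hH2 : Hq m (n+1) k ≠ 0) (hH3 : Hq m (n+2) k ≠ 0) (hH5 : Hq m (n+1) (k-1) ≠ 0)
    (hH6 : Hq m n k ≠ 0) (hG1 : Gq m (n+1) k ≠ 0) (hG2 : Gq m (n+1) (k-1) ≠ 0) :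
    (Hq m (n+1) k)⁻¹ * Hq m (n+1) (k-1) - (Gq m (n+1) k)⁻¹ * Gq m (n+1) (k-1)
      = (Hq m n k)⁻¹ * Hq m (n+1) (k-1) := by
  have hT2' : IsUnit (Tmat m (k - 1 + 1) (n+1)) := by rw [sub_add_cancel]; exact hT2
  obtain ⟨hA1, hBll⟩ := Hq_dict m (n+1) k hT2 hH2
  obtain ⟨-, hBl0⟩ := Gq_dict m (n+1) k hT1 hG1
  obtain ⟨hM, hDLL⟩ := Hq_dict m (n+2) k hA1 hH3
  obtain ⟨hA3, hE3ll⟩ := Hq_dict m (n+1) (k-1) hT5 hH5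
  obtain ⟨-, hE3l0⟩ := Gq_dict m (n+1) (k-1) hT2' hG2
  obtain ⟨-, hSll⟩ := Hq_dict m n k hT6 hH6
  set ℓ : Fin (n+3) := Fin.last (n+2) with hℓ
  set l₁ : Fin (n+2) := Fin.last (n+1) with hl₁
  set D : Matrix (Fin (n+3)) (Fin (n+3)) R := Ring.inverse (Tmat m k (n+3)) with hD
  set B : Matrix (Fin (n+2)) (Fin (n+2)) R := Ring.inverse (Tmat m k (n+2)) with hB
  have hMD : Tmat m k (n+3) * D = 1 := Ring.mul_inverse_cancel _ hM
  have hDM : D * Tmat m k (n+3) = 1 := Ring.inverse_mul_cancel _ hM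
  have hA1B : Tmat m k (n+2) * B = 1 := Ring.mul_inverse_cancel _ hA1
  have hBA1 : B * Tmat m k (n+2) = 1 := Ring.inverse_mul_cancel _ hA1
  set a : R := D ℓ ℓ with hadef
  set b : R := D ℓ 0 with hbdef
  set c : R := D 0 ℓ with hcdef
  set d : R := D 0 0 with hddef
  set u : R := D ℓ l₁.castSucc with hudef
  set w : R := D 0 l₁.castSucc with hwdef
  have hDLL' : a = (Hq m (n+2) k)⁻¹ := hDLL
  have ha0 : a ≠ 0 := by rw [hDLL']; exact inv_ne_zero hH3
  have hc0 : c ≠ 0 :=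
    quot_pivot_ne_zero _ D hMD hDM ℓ 0 (by rw [hℓ, Tmat_sub_l0]; exact hT4)
  have caR : ∀ z : R, a⁻¹ * (a * z) = z := fun z => by
    rw [← mul_assoc, inv_mul_cancel₀ ha0, one_mul]
  have ccL : ∀ z : R, c * (c⁻¹ * z) = z := fun z => by
    rw [← mul_assoc, mul_inv_cancel₀ hc0, one_mul]
  have hQll := quot_inv_eq _ D hMD hDM ℓ ℓ ha0
  rw [hℓ, Tmat_sub_ll] at hQll
  have hQl0 := quot_inv_eq _ D hMD hDM ℓ 0 hc0
  rw [hℓ, Tmat_sub_l0] at hQl0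
  -- entries of B in terms of D
  have e_B : ∀ x y : Fin (n+2),
      B x y = D x.castSucc y.castSucc - D x.castSucc ℓ * a⁻¹ * D ℓ y.castSucc := by
    intro x y
    rw [hB, hQll]
    simp only [Matrix.of_apply, Fin.succAbove_last]
    rfl
  have e_B00 : B 0 0 = d - c * a⁻¹ * b := by rw [e_B 0 0, Fin.castSucc_zero]
  have e_B0t : B 0 l₁ = w - c * a⁻¹ * u := by rw [e_B 0 l₁, Fin.castSucc_zero]
  have hK0 : B 0 0 ≠ 0 :=
    quot_pivot_ne_zero _ B hA1B hBA1 0 0 (by rw [Tmat_sub_00]; exact hT2)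
  -- entries of the (k-1) inverse in terms of D
  have e_E3 : ∀ x y : Fin (n+2),
      Ring.inverse (Tmat m (k-1) (n+2)) x y
        = D x.succ y.castSucc - D x.succ ℓ * c⁻¹ * D 0 y.castSucc := by
    intro x y
    rw [hQl0]
    simp only [Matrix.of_apply, Fin.succAbove_last, Fin.succAbove_zero]
    rfl
  have e_hp' : (Hq m (n+1) (k-1))⁻¹ = u - a * c⁻¹ * w := by
    rw [← hE3ll, e_E3 l₁ l₁, hl₁, Fin.succ_last]
  have e_gp' : (Gq m (n+1) (k-1))⁻¹ = b - a * c⁻¹ * d := by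
    rw [← hE3l0, e_E3 l₁ 0, hl₁, Fin.succ_last, Fin.castSucc_zero]
  -- the minor relation for Hq m n k
  have hV := quot_inv_eq _ B hA1B hBA1 0 0 hK0
  rw [Tmat_sub_00] at hV
  have e_hm : (Hq m n k)⁻¹ = B l₁ l₁ - B l₁ 0 * (B 0 0)⁻¹ * B 0 l₁ := by
    rw [← hSll, hV]
    simp only [Matrix.of_apply, Fin.succAbove_zero, Fin.succ_last]
    rfl
  -- key homological identities
  have k1 : B 0 0 = -(c * (a⁻¹ * (Gq m (n+1) (k-1))⁻¹)) := by
    rw [e_B00, e_gp']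
    simp only [mul_sub, mul_assoc, caR, ccL, neg_sub]
  have k2 : B 0 l₁ = -(c * (a⁻¹ * (Hq m (n+1) (k-1))⁻¹)) := by
    rw [e_B0t, e_hp']
    simp only [mul_sub, mul_assoc, caR, ccL, neg_sub]
  have key : B 0 0 * Gq m (n+1) (k-1) = B 0 l₁ * Hq m (n+1) (k-1) := by
    rw [k1, k2, neg_mul, neg_mul, mul_assoc, mul_assoc, mul_assoc, mul_assoc,
      inv_mul_cancel₀ hG2, inv_mul_cancel₀ hH5]
  have key2 : Gq m (n+1) (k-1) = (B 0 0)⁻¹ * (B 0 l₁ * Hq m (n+1) (k-1)) := by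
    rw [← key, ← mul_assoc, inv_mul_cancel₀ hK0, one_mul]
  -- final assembly
  rw [← hBll, ← hBl0, e_hm, key2, sub_mul]
  simp only [mul_assoc]
end LemB

/-- Non-commutative full-discrete relativistic Toda equation:
`(ψ_i^{(k+1)} − φ_i^{(k)})·ψ_{i+1}^{(k)} = ψ_i^{(k+1)}·(ψ_i^{(k)} − φ_i^{(k−1)})`,
and, for `i ≥ 1`, `ψ_i^{(k)} − φ_i^{(k)} = ψ_{i−1}^{(k)} − φ_{i−1}^{(k−1)}`. -/
theorem stmt_17 {R : Type*} [DivisionRing R] (m : ℤ → R) (k : ℤ) (i : ℕ)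
    (hT1 : IsUnit (Tmat m (k + 1) i))
    (hT2 : IsUnit (Tmat m k i))
    (hT3 : IsUnit (Tmat m k (i + 1)))
    (hT4 : IsUnit (Tmat m (k - 1) (i + 1)))
    (hT5 : IsUnit (Tmat m (k - 1) i))
    (hT6 : IsUnit (Tmat m k (i - 1)))
    (hT7 : IsUnit (Tmat m (k - 1) (i - 1)))
    (hH1 : Hq m i (k + 1) ≠ 0)
    (hH2 : Hq m i k ≠ 0)
    (hH3 : Hq m (i + 1) k ≠ 0)
    (hH4 : Hq m (i + 1) (k - 1) ≠ 0)
    (hH5 : Hq m i (k - 1) ≠ 0)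
    (hH6 : Hq m (i - 1) k ≠ 0)
    (hH7 : Hq m (i - 1) (k - 1) ≠ 0)
    (hG1 : Gq m i k ≠ 0)
    (hG2 : Gq m i (k - 1) ≠ 0)
    (hG3 : Gq m i (k - 2) ≠ 0)
    (hG4 : Gq m (i - 1) (k - 1) ≠ 0)
    (hG5 : Gq m (i - 1) (k - 2) ≠ 0) :
    (psi m i (k + 1) - phi m i k) * psi m (i + 1) k
        = psi m i (k + 1) * (psi m i k - phi m i (k - 1)) ∧
      (1 ≤ i →
        psi m i k - phi m i k = psi m (i - 1) k - phi m (i - 1) (k - 1)) := by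
  have A1 := lemA m i k hT2 hT1 hH2 hH1 hH3 hG1
  have A2 := lemA m i (k-1) hT5 (by rw [sub_add_cancel]; exact hT2) hH5
    (by rw [sub_add_cancel]; exact hH2) hH4 hG2
  rw [sub_add_cancel] at A2
  have chp : ∀ z : R, (Hq m i (k+1))⁻¹ * (Hq m i (k+1) * z) = z := fun z => by
    rw [← mul_assoc, inv_mul_cancel₀ hH1, one_mul]
  have ch : ∀ z : R, (Hq m i k)⁻¹ * (Hq m i k * z) = z := fun z => by
    rw [← mul_assoc, inv_mul_cancel₀ hH2, one_mul]
  have ch1 : ∀ z : R, Hq m (i+1) k * ((Hq m (i+1) k)⁻¹ * z) = z := fun z => by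
    rw [← mul_assoc, mul_inv_cancel₀ hH3, one_mul]
  have chk : ∀ z : R, Hq m i k * ((Hq m i k)⁻¹ * z) = z := fun z => by
    rw [← mul_assoc, mul_inv_cancel₀ hH2, one_mul]
  constructor
  · have E1 : psi m i (k + 1) - phi m i k = (Hq m i (k+1))⁻¹ * Hq m (i+1) k := by
      rw [psi, phi, A1, add_sub_cancel_right]
      simp only [mul_sub, mul_assoc, chp]
    have E2 : psi m i k - phi m i (k - 1) = (Hq m i k)⁻¹ * Hq m (i+1) (k-1) := by
      rw [psi, phi, A2]
      simp only [mul_sub, mul_assoc, ch]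
    rw [E1, E2, psi, psi, add_sub_cancel_right]
    simp only [mul_assoc, ch1, chk]
  · intro hi
    obtain ⟨j, rfl⟩ : ∃ j, i = j + 1 := ⟨i - 1, by omega⟩
    simp only [Nat.add_sub_cancel] at hT6 hT7 hH6 hH7 hG4 hG5 ⊢
    have B1 := lemB m j k hT1 hT2 hT4 hT5 hT6 hH2 hH3 hH5 hH6 hG1 hG2
    have A3 := lemA m j (k-1) hT7 (by rw [sub_add_cancel]; exact hT6) hH7
      (by rw [sub_add_cancel]; exact hH6) hH5 hG4
    rw [sub_add_cancel] at A3
    have chj : ∀ z : R, (Hq m j k)⁻¹ * (Hq m j k * z) = z := fun z => by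
      rw [← mul_assoc, inv_mul_cancel₀ hH6, one_mul]
    have E3 : psi m j k - phi m j (k - 1) = (Hq m j k)⁻¹ * Hq m (j+1) (k-1) := by
      rw [psi, phi, A3]
      simp only [mul_sub, mul_assoc, chj]
    rw [E3, psi, phi]
    exact B1
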